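/- Let d ≥ 2, and μ a map assigning to each d×n data matrix X (for a fixed n) a point in ℝᵈ, invariant under permutations of columns, such that μ(AX + v𝟏ₙ′) = Aμ(X) + v for every d×d matrix A (possibly singular) and v ∈ ℝᵈ. Then μ(X) = X̄, the sample mean of the columns of X. -/

import Mathlib

open Matrix Finset

/-- Theorem 4(a) (Obenchain): a permutation-invariant, singularly affine equivariant
location functional on d×n data matrices (d ≥ 2) is the sample mean. -/
theorem location_functional_is_mean {d n : ℕ} (hd : 2 ≤ d) (hn : 1 ≤ n)
    (μ : Matrix (Fin d) (Fin n) ℝ → (Fin d → ℝ))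
    (hperm : ∀ (X : Matrix (Fin d) (Fin n) ℝ) (σ : Equiv.Perm (Fin n)),
      μ (X.submatrix id σ) = μ X)
    (hequiv : ∀ (A : Matrix (Fin d) (Fin d) ℝ) (v : Fin d → ℝ)
      (X : Matrix (Fin d) (Fin n) ℝ),
      μ (A * X + Matrix.of fun i _ => v i) = A.mulVec (μ X) + v) :
    ∀ X : Matrix (Fin d) (Fin n) ℝ, μ X = fun i => (∑ j, X i j) / n := by
  have hn0 : (n : ℝ) ≠ 0 := by
    have : 0 < n := hn
    positivity
  set i0 : Fin d := ⟨0, by omega⟩ with hi0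
  set i1 : Fin d := ⟨1, by omega⟩ with hi1
  have hi01 : i0 ≠ i1 := by
    simp [hi0, hi1, Fin.ext_iff]
  set j0 : Fin n := ⟨0, by omega⟩ with hj0
  -- constant matrix functional
  set C : (Fin n → ℝ) → Matrix (Fin d) (Fin n) ℝ :=
    fun x => Matrix.of fun _ j => x j with hC
  set g : (Fin n → ℝ) → ℝ := fun x => μ (C x) i0 with hg
  -- hequiv with v = 0
  have hequiv0 : ∀ (A : Matrix (Fin d) (Fin d) ℝ) (X : Matrix (Fin d) (Fin n) ℝ),
      μ (A * X) = A.mulVec (μ X) := by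
    intro A X
    have := hequiv A 0 X
    have h1 : (Matrix.of fun (i : Fin d) (_ : Fin n) => (0:ℝ)) = 0 := rfl
    simp only [Pi.zero_apply, h1, add_zero] at this
    exact this
  -- μ X i = g (X i)
  have row : ∀ (X : Matrix (Fin d) (Fin n) ℝ) (i : Fin d), μ X i = g (X i) := by
    intro X i
    set A : Matrix (Fin d) (Fin d) ℝ :=
      Matrix.of fun _ b => if b = i then (1:ℝ) else 0 with hA
    have hAX : A * X = C (X i) := by
      ext a j
      simp [hA, hC, Matrix.mul_apply, ite_mul]
    have := hequiv0 A X
    rw [hAX] at this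
    have := congrFun this i0
    simp [hg, this, Matrix.mulVec, dotProduct, hA, ite_mul]
  -- additivity of g
  have gadd : ∀ x y : Fin n → ℝ, g (x + y) = g x + g y := by
    intro x y
    set X : Matrix (Fin d) (Fin n) ℝ :=
      Matrix.of fun a j => if a = i0 then x j else if a = i1 then y j else 0 with hX
    set A : Matrix (Fin d) (Fin d) ℝ :=
      (Matrix.of fun (_ b : Fin d) => if b = i0 then (1:ℝ) else 0) +
      (Matrix.of fun (_ b : Fin d) => if b = i1 then (1:ℝ) else 0) with hA
    have hAX : A * X = C (x + y) := by
      ext a j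
      have hterm : ∀ b : Fin d, A a b * X b j =
          (if b = i0 then x j else 0) + (if b = i1 then y j else 0) := by
        intro b
        by_cases h1 : b = i0
        · subst h1; simp [hA, hX, hi01, hi01.symm]
        · by_cases h2 : b = i1
          · subst h2; simp [hA, hX, hi01.symm, h1]
          · simp [hA, hX, h1, h2]
      simp only [Matrix.mul_apply, hterm]
      rw [Finset.sum_add_distrib, Finset.sum_ite_eq', Finset.sum_ite_eq']
      simp [hC]
    have := hequiv0 A X
    rw [hAX] at this
    have h2 := congrFun this i0
    have hX0 : X i0 = x := by funext j; simp [hX]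
    have hX1 : X i1 = y := by funext j; simp [hX, hi01.symm]
    have hmv : A.mulVec (μ X) i0 = μ X i0 + μ X i1 := by
      simp [hA, Matrix.mulVec, dotProduct, add_mul, ite_mul,
        Finset.sum_add_distrib]
    rw [hmv] at h2
    have hgx : g x = μ X i0 := by rw [row X i0, hX0]
    have hgy : g y = μ X i1 := by rw [row X i1, hX1]
    rw [hgx, hgy, ← h2]
  have g0 : g 0 = 0 := by
    have := gadd 0 0
    simp at this
    linarith
  -- permutation invariance of g
  have gperm : ∀ (x : Fin n → ℝ) (σ : Equiv.Perm (Fin n)), g (x ∘ σ) = g x := by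
    intro x σ
    have hCs : C (x ∘ σ) = (C x).submatrix id σ := rfl
    simp [hg, hCs, hperm]
  -- constants
  have gconst : ∀ c : ℝ, g (fun _ => c) = c := by
    intro c
    have := hequiv 0 (fun _ => c) 0
    simp only [Matrix.zero_mul, Matrix.zero_mulVec, zero_add] at this
    have h2 := congrFun this i0
    simpa [hg, hC] using h2
  -- single-coordinate functional
  set h : ℝ → ℝ := fun t => g (fun j => if j = j0 then t else 0) with hh
  have hind : ∀ (t : ℝ) (j : Fin n),
      g (fun j' => if j' = j then t else 0) = h t := by
    intro t j
    have := gperm (fun j' => if j' = j0 then t else 0) (Equiv.swap j j0)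
    have heq : ((fun j' => if j' = j0 then t else 0) ∘ (Equiv.swap j j0)) =
        (fun j' => if j' = j then t else 0) := by
      funext j'
      simp only [Function.comp_apply]
      congr 1
      simp only [eq_iff_iff]
      rw [Equiv.swap_apply_eq_iff, Equiv.swap_apply_right]
    rw [heq] at this
    exact this
  -- g of a sum
  have gsum : ∀ (s : Finset (Fin n)) (f : Fin n → Fin n → ℝ),
      g (∑ j ∈ s, f j) = ∑ j ∈ s, g (f j) := by
    intro s f
    induction s using Finset.induction_on with
    | empty => simpa using g0
    | insert _ _ hj ih =>
      rw [Finset.sum_insert hj, Finset.sum_insert hj, gadd, ih]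
  -- h is the scaled identity
  have hval : ∀ c : ℝ, h c = c / n := by
    intro c
    have hdecomp : (fun _ : Fin n => c) = ∑ j : Fin n, (fun j' => if j' = j then c else 0) := by
      funext j'
      simp [Finset.sum_apply, Finset.sum_ite_eq]
    have := gconst c
    rw [hdecomp, gsum] at this
    simp only [hind] at this
    rw [Finset.sum_const, Finset.card_univ, Fintype.card_fin] at this
    field_simp
    rw [mul_comm]
    simpa [nsmul_eq_mul] using this
  -- main computation for g
  have gval : ∀ x : Fin n → ℝ, g x = (∑ j, x j) / n := by
    intro x
    have hdecomp : x = ∑ j : Fin n, (fun j' => if j' = j then x j else 0) := by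
      funext j'
      simp [Finset.sum_apply, Finset.sum_ite_eq]
    conv_lhs => rw [hdecomp]
    rw [gsum]
    simp only [hind, hval]
    rw [Finset.sum_div]
  intro X
  funext i
  rw [row X i, gval]
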